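/- For any y in the interior of P(X) (all coordinates positive), ⟨V(y), ∇g(y)⟩ = ∑_{k=1}^K ∑_{n∈X, n_k≥1} F_n^k(y) log[((λ_k + γ_k⟨I_k,y⟩) y_{n−f_k}) / ((μ_k+γ_k) n_k y_n)] ≤ 0, where F_n^k(y) = (μ_k+γ_k) n_k y_n − (λ_k + γ_k⟨I_k,y⟩) y_{n−f_k}. -/

import Mathlib

open Finset

/-- The state space `X = {n ∈ ℕ^K : ∑_j A_j n_j ≤ C}` as a `Finset` of `Fin K → ℕ`. -/
def XF (K C : ℕ) (A : Fin K → ℕ) : Finset (Fin K → ℕ) :=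
  (Fintype.piFinset fun _ => Finset.range (C + 1)).filter fun n => ∑ k, A k * n k ≤ C

/-- Extension of `y : X → ℝ` by `0` outside `X`. -/
noncomputable def ye (K C : ℕ) (A : Fin K → ℕ) (y : XF K C A → ℝ) (m : Fin K → ℕ) : ℝ :=
  if h : m ∈ XF K C A then y ⟨m, h⟩ else 0

/-- `⟨I_k, y⟩ = ∑_{m ∈ X} m_k y_m`. -/
noncomputable def avgS (K C : ℕ) (A : Fin K → ℕ) (y : XF K C A → ℝ) (k : Fin K) : ℝ :=
  ∑ n : XF K C A, (n.1 k : ℝ) * y n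

/-- The limiting vector field `V` on `P(X)`. -/
noncomputable def Vs (K C : ℕ) (A : Fin K → ℕ) (lam gam mu : Fin K → ℝ)
    (y : XF K C A → ℝ) (n : XF K C A) : ℝ :=
  (∑ k, (lam k + gam k * avgS K C A y k) *
      ((if 1 ≤ n.1 k then ye K C A y (n.1 - Pi.single k 1) else 0)
        - (if n.1 + Pi.single k 1 ∈ XF K C A then y n else 0)))
  + ∑ k, (gam k + mu k) *
      (((n.1 k : ℝ) + 1) *
          (if n.1 + Pi.single k 1 ∈ XF K C A then ye K C A y (n.1 + Pi.single k 1) else 0)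
        - (n.1 k : ℝ) * y n)

/-- The energy function
`g(y) = ∑_{n∈X} y_n log(n! y_n) − ∑_k ∫_0^{⟨I_k,y⟩} log((λ_k+γ_k x)/(μ_k+γ_k)) dx`. -/
noncomputable def gE (K C : ℕ) (A : Fin K → ℕ) (lam gam mu : Fin K → ℝ)
    (y : XF K C A → ℝ) : ℝ :=
  (∑ n : XF K C A, y n * Real.log ((∏ k, (Nat.factorial (n.1 k) : ℝ)) * y n))
  - ∑ k, ∫ x in (0:ℝ)..(avgS K C A y k), Real.log ((lam k + gam k * x) / (mu k + gam k))

/-- `F_n^k(y) = (μ_k+γ_k) n_k y_n − (λ_k + γ_k⟨I_k,y⟩) y_{n−f_k}`. -/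
noncomputable def FE (K C : ℕ) (A : Fin K → ℕ) (lam gam mu : Fin K → ℝ)
    (y : XF K C A → ℝ) (k : Fin K) (n : XF K C A) : ℝ :=
  (mu k + gam k) * (n.1 k : ℝ) * y n
    - (lam k + gam k * avgS K C A y k) * ye K C A y (n.1 - Pi.single k 1)

/-- For `y` in the interior of `P(X)`,
`⟨V(y), ∇g(y)⟩ = ∑_k ∑_{n : n_k ≥ 1} F_n^k(y) log(((λ_k+γ_k⟨I_k,y⟩)y_{n−f_k})/((μ_k+γ_k)n_k y_n)) ≤ 0`. -/
noncomputable def prj (K C : ℕ) (A : Fin K → ℕ) (m : XF K C A) :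
    ((XF K C A) → ℝ) →L[ℝ] ℝ := ContinuousLinearMap.proj m

lemma hasFDerivAt_avgS (K C : ℕ) (A : Fin K → ℕ) (y : XF K C A → ℝ) (k : Fin K) :
    HasFDerivAt (fun y : XF K C A → ℝ => avgS K C A y k)
      (∑ m : XF K C A, (m.1 k : ℝ) • prj K C A m) y := by
  unfold avgS
  exact HasFDerivAt.fun_sum fun m _ => ((prj K C A m).hasFDerivAt (x := y)).const_mul _

lemma hasFDerivAt_gE (K C : ℕ) (A : Fin K → ℕ) (lam gam mu : Fin K → ℝ)
    (hlam : ∀ k, 0 < lam k) (hgam : ∀ k, 0 ≤ gam k) (hmg : ∀ k, 0 < mu k + gam k)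
    (y : XF K C A → ℝ) (hy : ∀ n, 0 < y n) :
    HasFDerivAt (gE K C A lam gam mu)
      ((∑ m : XF K C A,
          (Real.log ((∏ k, (Nat.factorial (m.1 k) : ℝ)) * y m) + 1) • prj K C A m)
        - ∑ k, Real.log ((lam k + gam k * avgS K C A y k) / (mu k + gam k)) •
            ∑ m : XF K C A, (m.1 k : ℝ) • prj K C A m) y := by
  have havgpos : ∀ k, 0 ≤ avgS K C A y k := fun k =>
    Finset.sum_nonneg fun m _ => mul_nonneg (Nat.cast_nonneg _) (hy m).le
  have h1 : HasFDerivAt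
      (fun y : XF K C A → ℝ => ∑ n : XF K C A, y n * Real.log ((∏ k, (Nat.factorial (n.1 k) : ℝ)) * y n))
      (∑ m : XF K C A,
          (Real.log ((∏ k, (Nat.factorial (m.1 k) : ℝ)) * y m) + 1) • prj K C A m) y := by
    apply HasFDerivAt.fun_sum
    intro m _
    set c : ℝ := ∏ k, (Nat.factorial (m.1 k) : ℝ) with hc
    have hcpos : 0 < c := Finset.prod_pos fun k _ => by positivity
    have hney : y m ≠ 0 := (hy m).ne'
    have hct : HasDerivAt (fun t : ℝ => c * t) c (y m) := by
      simpa using (hasDerivAt_id (y m)).const_mul c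
    have hlog : HasDerivAt (fun t : ℝ => Real.log (c * t)) (c / (c * y m)) (y m) :=
      hct.log (mul_ne_zero hcpos.ne' hney)
    have hmul : HasDerivAt (fun t : ℝ => t * Real.log (c * t))
        (1 * Real.log (c * y m) + y m * (c / (c * y m))) (y m) :=
      (hasDerivAt_id (y m)).mul hlog
    have hval : 1 * Real.log (c * y m) + y m * (c / (c * y m))
        = Real.log (c * y m) + 1 := by
      field_simp
    rw [hval] at hmul
    exact hmul.comp_hasFDerivAt y ((prj K C A m).hasFDerivAt (x := y))
  have h2 : HasFDerivAt
      (fun y : XF K C A → ℝ => ∑ k, ∫ x in (0:ℝ)..(avgS K C A y k),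
          Real.log ((lam k + gam k * x) / (mu k + gam k)))
      (∑ k, Real.log ((lam k + gam k * avgS K C A y k) / (mu k + gam k)) •
          ∑ m : XF K C A, (m.1 k : ℝ) • prj K C A m) y := by
    apply HasFDerivAt.fun_sum
    intro k _
    set a := avgS K C A y k with ha
    have hapos : 0 ≤ a := havgpos k
    have hcontOn : ContinuousOn (fun x : ℝ => Real.log ((lam k + gam k * x) / (mu k + gam k)))
        (Set.uIcc 0 a) := by
      intro x hx
      have hx0 : 0 ≤ x := by
        rcases Set.mem_uIcc.mp hx with h | h
        · exact h.1
        · linarith [h.1, hapos]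
      have hpos : 0 < (lam k + gam k * x) / (mu k + gam k) :=
        div_pos (by nlinarith [hlam k, hgam k]) (hmg k)
      exact (((by fun_prop : Continuous fun x : ℝ => (lam k + gam k * x) / (mu k + gam k)).continuousAt).log hpos.ne').continuousWithinAt
    have hint : IntervalIntegrable (fun x : ℝ => Real.log ((lam k + gam k * x) / (mu k + gam k)))
        MeasureTheory.volume 0 a := hcontOn.intervalIntegrable
    have hca : ContinuousAt (fun x : ℝ => Real.log ((lam k + gam k * x) / (mu k + gam k))) a := by
      have hpos : 0 < (lam k + gam k * a) / (mu k + gam k) :=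
        div_pos (by nlinarith [hlam k, hgam k]) (hmg k)
      exact ((by fun_prop : Continuous fun x : ℝ => (lam k + gam k * x) / (mu k + gam k)).continuousAt).log hpos.ne'
    have hFTC : HasDerivAt (fun t : ℝ => ∫ x in (0:ℝ)..t,
        Real.log ((lam k + gam k * x) / (mu k + gam k)))
        (Real.log ((lam k + gam k * a) / (mu k + gam k))) a :=
      intervalIntegral.integral_hasDerivAt_right hint
        (((((measurable_id.const_mul (gam k)).const_add (lam k)).div_const
            (mu k + gam k)).log).stronglyMeasurable.stronglyMeasurableAtFilter) hca
    exact hFTC.comp_hasFDerivAt y (hasFDerivAt_avgS K C A y k)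
  exact h1.sub h2

lemma fderiv_gE_single (K C : ℕ) (A : Fin K → ℕ) (lam gam mu : Fin K → ℝ)
    (hlam : ∀ k, 0 < lam k) (hgam : ∀ k, 0 ≤ gam k) (hmg : ∀ k, 0 < mu k + gam k)
    (y : XF K C A → ℝ) (hy : ∀ n, 0 < y n) (n : XF K C A) :
    fderiv ℝ (gE K C A lam gam mu) y (Pi.single n 1)
      = Real.log ((∏ k, (Nat.factorial (n.1 k) : ℝ)) * y n) + 1
        - ∑ k, (n.1 k : ℝ) * Real.log ((lam k + gam k * avgS K C A y k) / (mu k + gam k)) := by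
  rw [(hasFDerivAt_gE K C A lam gam mu hlam hgam hmg y hy).fderiv]
  simp [prj, ContinuousLinearMap.sum_apply, Pi.single_apply, mul_ite,
    Finset.sum_ite_eq', mul_comm]

lemma ye_coe (K C : ℕ) (A : Fin K → ℕ) (y : XF K C A → ℝ) (n : XF K C A) :
    ye K C A y n.1 = y n := by
  simp [ye]

lemma sub_mem_XF {K C : ℕ} {A : Fin K → ℕ} {n : Fin K → ℕ} (hn : n ∈ XF K C A) (k : Fin K) :
    n - Pi.single k 1 ∈ XF K C A := by
  simp only [XF, Finset.mem_filter, Fintype.mem_piFinset, Finset.mem_range] at hn ⊢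
  exact ⟨fun j => lt_of_le_of_lt (Nat.sub_le _ _) (hn.1 j),
    le_trans (Finset.sum_le_sum fun j _ => Nat.mul_le_mul_left _ (Nat.sub_le _ _)) hn.2⟩

lemma add_sub_single {K : ℕ} (m : Fin K → ℕ) (k : Fin K) :
    m + Pi.single k 1 - Pi.single k 1 = m := by
  funext j
  simp [Pi.sub_apply]

lemma sub_add_single {K : ℕ} {n : Fin K → ℕ} {k : Fin K} (h : 1 ≤ n k) :
    n - Pi.single k 1 + Pi.single k 1 = n := by
  funext j
  by_cases hj : j = k
  · subst hj; simp [Pi.sub_apply]; omega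
  · simp [Pi.sub_apply, Pi.single_apply, hj]

/-- abstract rearrangement (discrete integration by parts) -/
lemma rearrange (K C : ℕ) (A : Fin K → ℕ) (lam' mu' : Fin K → ℝ)
    (Y G : (Fin K → ℕ) → ℝ) (D : Fin K → (Fin K → ℕ) → ℝ)
    (hG : ∀ k, ∀ n ∈ XF K C A, 1 ≤ n k → G n - G (n - Pi.single k 1) = D k n) :
    ∑ m ∈ XF K C A,
      ((∑ k, lam' k * ((if 1 ≤ m k then Y (m - Pi.single k 1) else 0)
          - (if m + Pi.single k 1 ∈ XF K C A then Y m else 0)))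
        + ∑ k, mu' k *
            (((m k : ℝ) + 1) * (if m + Pi.single k 1 ∈ XF K C A then Y (m + Pi.single k 1) else 0)
              - (m k : ℝ) * Y m)) * G m
    = ∑ k, ∑ n ∈ (XF K C A).filter (fun n => 1 ≤ n k),
        (lam' k * Y (n - Pi.single k 1) - mu' k * (n k : ℝ) * Y n) * D k n := by
  have step : ∑ m ∈ XF K C A,
      ((∑ k, lam' k * ((if 1 ≤ m k then Y (m - Pi.single k 1) else 0)
          - (if m + Pi.single k 1 ∈ XF K C A then Y m else 0)))
        + ∑ k, mu' k *
            (((m k : ℝ) + 1) * (if m + Pi.single k 1 ∈ XF K C A then Y (m + Pi.single k 1) else 0)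
              - (m k : ℝ) * Y m)) * G m
      = ∑ k, ∑ m ∈ XF K C A,
          (lam' k * ((if 1 ≤ m k then Y (m - Pi.single k 1) else 0)
              - (if m + Pi.single k 1 ∈ XF K C A then Y m else 0))
            + mu' k * (((m k : ℝ) + 1) *
                (if m + Pi.single k 1 ∈ XF K C A then Y (m + Pi.single k 1) else 0)
              - (m k : ℝ) * Y m)) * G m := by
    rw [Finset.sum_comm]
    refine Finset.sum_congr rfl fun m _ => ?_
    rw [← Finset.sum_mul, ← Finset.sum_add_distrib]
  rw [step]
  refine Finset.sum_congr rfl fun k _ => ?_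
  -- fix k
  have e1 : ∑ m ∈ XF K C A,
      (lam' k * ((if 1 ≤ m k then Y (m - Pi.single k 1) else 0)
          - (if m + Pi.single k 1 ∈ XF K C A then Y m else 0))
        + mu' k * (((m k : ℝ) + 1) *
            (if m + Pi.single k 1 ∈ XF K C A then Y (m + Pi.single k 1) else 0)
          - (m k : ℝ) * Y m)) * G m
      = ((∑ m ∈ (XF K C A).filter (fun m => 1 ≤ m k), lam' k * Y (m - Pi.single k 1) * G m)
          - ∑ m ∈ (XF K C A).filter (fun m => m + Pi.single k 1 ∈ XF K C A), lam' k * Y m * G m)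
        + ((∑ m ∈ (XF K C A).filter (fun m => m + Pi.single k 1 ∈ XF K C A),
              mu' k * ((m k : ℝ) + 1) * Y (m + Pi.single k 1) * G m)
          - ∑ m ∈ (XF K C A).filter (fun m => 1 ≤ m k), mu' k * (m k : ℝ) * Y m * G m) := by
    rw [Finset.sum_filter, Finset.sum_filter, Finset.sum_filter, Finset.sum_filter,
      ← Finset.sum_sub_distrib, ← Finset.sum_sub_distrib, ← Finset.sum_add_distrib]
    refine Finset.sum_congr rfl fun m _ => ?_
    by_cases h1 : 1 ≤ m k
    · by_cases h2 : m + Pi.single k 1 ∈ XF K C A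
      · simp only [if_pos h1, if_pos h2]; ring
      · simp only [if_pos h1, if_neg h2]; ring
    · have hz : m k = 0 := by omega
      by_cases h2 : m + Pi.single k 1 ∈ XF K C A
      · simp only [hz, Nat.cast_zero, if_pos h2, if_neg (show ¬(1:ℕ) ≤ 0 by omega)]; ring
      · simp only [hz, Nat.cast_zero, if_neg h2, if_neg (show ¬(1:ℕ) ≤ 0 by omega)]; ring
  have r2 : ∑ m ∈ (XF K C A).filter (fun m => m + Pi.single k 1 ∈ XF K C A),
        lam' k * Y m * G m
      = ∑ n ∈ (XF K C A).filter (fun n => 1 ≤ n k),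
          lam' k * Y (n - Pi.single k 1) * G (n - Pi.single k 1) := by
    refine Finset.sum_nbij' (fun m => m + Pi.single k 1) (fun n => n - Pi.single k 1)
      ?_ ?_ ?_ ?_ ?_
    · intro m hm
      rw [Finset.mem_filter] at hm ⊢
      exact ⟨hm.2, by simp⟩
    · intro n hn
      rw [Finset.mem_filter] at hn ⊢
      refine ⟨sub_mem_XF hn.1 k, ?_⟩
      rw [sub_add_single hn.2]
      exact hn.1
    · intro m _
      exact add_sub_single m k
    · intro n hn
      rw [Finset.mem_filter] at hn
      exact sub_add_single hn.2
    · intro m _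
      rw [add_sub_single m k]
  have r3 : ∑ m ∈ (XF K C A).filter (fun m => m + Pi.single k 1 ∈ XF K C A),
        mu' k * ((m k : ℝ) + 1) * Y (m + Pi.single k 1) * G m
      = ∑ n ∈ (XF K C A).filter (fun n => 1 ≤ n k),
          mu' k * (n k : ℝ) * Y n * G (n - Pi.single k 1) := by
    refine Finset.sum_nbij' (fun m => m + Pi.single k 1) (fun n => n - Pi.single k 1)
      ?_ ?_ ?_ ?_ ?_
    · intro m hm
      rw [Finset.mem_filter] at hm ⊢
      exact ⟨hm.2, by simp⟩
    · intro n hn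
      rw [Finset.mem_filter] at hn ⊢
      refine ⟨sub_mem_XF hn.1 k, ?_⟩
      rw [sub_add_single hn.2]
      exact hn.1
    · intro m _
      exact add_sub_single m k
    · intro n hn
      rw [Finset.mem_filter] at hn
      exact sub_add_single hn.2
    · intro m _
      rw [add_sub_single m k]
      have hmk : (((m + Pi.single k 1 : Fin K → ℕ) k : ℕ) : ℝ) = (m k : ℝ) + 1 := by
        simp
      rw [hmk]
  rw [e1, r2, r3, ← Finset.sum_sub_distrib, ← Finset.sum_sub_distrib,
    ← Finset.sum_add_distrib]
  refine Finset.sum_congr rfl fun n hn => ?_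
  rw [Finset.mem_filter] at hn
  rw [← hG k n hn.1 hn.2]
  ring

lemma fact_split {K : ℕ} {n : Fin K → ℕ} {k : Fin K} (hnk : 1 ≤ n k) :
    (∏ j, (Nat.factorial (n j) : ℝ))
      = (n k : ℝ) * ∏ j, (Nat.factorial ((n - Pi.single k 1 : Fin K → ℕ) j) : ℝ) := by
  have key : ∀ j, (Nat.factorial (n j) : ℝ)
      = (if j = k then (n k : ℝ) else 1) * (Nat.factorial ((n - Pi.single k 1 : Fin K → ℕ) j) : ℝ) := by
    intro j
    by_cases hj : j = k
    · subst hj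
      have h1 : (n - Pi.single j 1 : Fin K → ℕ) j = n j - 1 := by simp [Pi.sub_apply]
      have h2 : n j - 1 + 1 = n j := Nat.succ_pred_eq_of_pos hnk
      rw [h1, if_pos rfl, ← h2, Nat.factorial_succ, h2]
      push_cast [h2]
      ring
    · simp [hj, Pi.sub_apply, Pi.single_apply]
  rw [Finset.prod_congr rfl fun j _ => key j, Finset.prod_mul_distrib,
    Finset.prod_ite_eq' Finset.univ k (fun _ => (n k : ℝ))]
  simp

lemma coeff_split {K : ℕ} {n : Fin K → ℕ} {k : Fin K} (hnk : 1 ≤ n k) (L : Fin K → ℝ) :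
    (∑ j, (n j : ℝ) * L j) - (∑ j, ((n - Pi.single k 1 : Fin K → ℕ) j : ℝ) * L j) = L k := by
  rw [← Finset.sum_sub_distrib]
  have key : ∀ j ∈ Finset.univ, (n j : ℝ) * L j - ((n - Pi.single k 1 : Fin K → ℕ) j : ℝ) * L j
      = if j = k then L j else 0 := by
    intro j _
    by_cases hj : j = k
    · subst hj
      have h1 : (n - Pi.single j 1 : Fin K → ℕ) j = n j - 1 := by simp [Pi.sub_apply]
      rw [h1, if_pos rfl, Nat.cast_sub hnk]
      ring
    · simp [hj, Pi.sub_apply, Pi.single_apply]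
  rw [Finset.sum_congr rfl key, Finset.sum_ite_eq' Finset.univ k]
  simp

theorem lyapunov_identity (K C : ℕ) (hK : 0 < K) (hC : 0 < C)
    (A : Fin K → ℕ) (hA : ∀ k, 0 < A k)
    (lam gam mu : Fin K → ℝ)
    (hlam : ∀ k, 0 < lam k) (hgam : ∀ k, 0 ≤ gam k) (hmu : ∀ k, 0 ≤ mu k)
    (hmg : ∀ k, 0 < mu k + gam k)
    (y : XF K C A → ℝ) (hy : ∀ n, 0 < y n) (hysum : ∑ n : XF K C A, y n = 1) :
    (∑ n : XF K C A, Vs K C A lam gam mu y n *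
        fderiv ℝ (gE K C A lam gam mu) y (Pi.single n 1)) =
      (∑ k, ∑ n ∈ Finset.univ.filter (fun n : XF K C A => 1 ≤ n.1 k),
        FE K C A lam gam mu y k n *
          Real.log ((lam k + gam k * avgS K C A y k) * ye K C A y (n.1 - Pi.single k 1) /
            ((mu k + gam k) * (n.1 k : ℝ) * y n))) ∧
    (∑ n : XF K C A, Vs K C A lam gam mu y n *
        fderiv ℝ (gE K C A lam gam mu) y (Pi.single n 1)) ≤ 0 := by
  classical
  have hanneg : ∀ k, 0 ≤ avgS K C A y k := fun k =>
    Finset.sum_nonneg fun m _ => mul_nonneg (Nat.cast_nonneg _) (hy m).le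
  have hlampos : ∀ k, 0 < lam k + gam k * avgS K C A y k := fun k => by
    have := mul_nonneg (hgam k) (hanneg k)
    linarith [hlam k]
  have hYpos : ∀ m ∈ XF K C A, 0 < ye K C A y m := by
    intro m hm
    rw [ye, dif_pos hm]
    exact hy _
  -- the energy gradient as a function of the plain index
  set G : (Fin K → ℕ) → ℝ := fun m =>
    Real.log ((∏ j, (Nat.factorial (m j) : ℝ)) * ye K C A y m) + 1
      - ∑ j, (m j : ℝ) *
          Real.log ((lam j + gam j * avgS K C A y j) / (mu j + gam j)) with hGdef
  have hGdiff : ∀ k, ∀ n ∈ XF K C A, 1 ≤ n k →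
      G n - G (n - Pi.single k 1)
        = Real.log ((mu k + gam k) * (n k : ℝ) * ye K C A y n)
          - Real.log ((lam k + gam k * avgS K C A y k) * ye K C A y (n - Pi.single k 1)) := by
    intro k n hn hnk
    have hn' : n - Pi.single k 1 ∈ XF K C A := sub_mem_XF hn k
    have hYn : 0 < ye K C A y n := hYpos n hn
    have hYn' : 0 < ye K C A y (n - Pi.single k 1) := hYpos _ hn'
    have hc' : 0 < ∏ j, (Nat.factorial ((n - Pi.single k 1 : Fin K → ℕ) j) : ℝ) :=
      Finset.prod_pos fun j _ => by positivity
    have hnkR : 0 < (n k : ℝ) := by exact_mod_cast hnk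
    have hA : Real.log ((∏ j, (Nat.factorial (n j) : ℝ)) * ye K C A y n)
        = Real.log (n k : ℝ) + Real.log (∏ j, (Nat.factorial ((n - Pi.single k 1 : Fin K → ℕ) j) : ℝ))
          + Real.log (ye K C A y n) := by
      rw [fact_split hnk, Real.log_mul (by positivity) hYn.ne',
        Real.log_mul hnkR.ne' hc'.ne']
    have hB : Real.log ((∏ j, (Nat.factorial ((n - Pi.single k 1 : Fin K → ℕ) j) : ℝ))
          * ye K C A y (n - Pi.single k 1))
        = Real.log (∏ j, (Nat.factorial ((n - Pi.single k 1 : Fin K → ℕ) j) : ℝ))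
          + Real.log (ye K C A y (n - Pi.single k 1)) :=
      Real.log_mul hc'.ne' hYn'.ne'
    have hS := coeff_split hnk
      (fun j => Real.log ((lam j + gam j * avgS K C A y j) / (mu j + gam j)))
    have hS' : Real.log ((lam k + gam k * avgS K C A y k) / (mu k + gam k))
        = Real.log (lam k + gam k * avgS K C A y k) - Real.log (mu k + gam k) :=
      Real.log_div (hlampos k).ne' (hmg k).ne'
    have hR1 : Real.log ((mu k + gam k) * (n k : ℝ) * ye K C A y n)
        = Real.log (mu k + gam k) + Real.log (n k : ℝ) + Real.log (ye K C A y n) := by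
      rw [Real.log_mul (mul_pos (hmg k) hnkR).ne' hYn.ne', Real.log_mul (hmg k).ne' hnkR.ne']
    have hR2 : Real.log ((lam k + gam k * avgS K C A y k) * ye K C A y (n - Pi.single k 1))
        = Real.log (lam k + gam k * avgS K C A y k)
          + Real.log (ye K C A y (n - Pi.single k 1)) :=
      Real.log_mul (hlampos k).ne' hYn'.ne'
    simp only [hGdef]
    rw [hA, hB, hR1, hR2]
    rw [hS'] at hS
    linarith [hS]
  -- step 1 : rewrite the pairing as a sum over the plain finset
  have step1 : (∑ n : XF K C A, Vs K C A lam gam mu y n *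
        fderiv ℝ (gE K C A lam gam mu) y (Pi.single n 1))
      = ∑ m ∈ XF K C A,
          ((∑ k, (lam k + gam k * avgS K C A y k) *
              ((if 1 ≤ m k then ye K C A y (m - Pi.single k 1) else 0)
                - (if m + Pi.single k 1 ∈ XF K C A then ye K C A y m else 0)))
            + ∑ k, (gam k + mu k) *
                (((m k : ℝ) + 1) *
                    (if m + Pi.single k 1 ∈ XF K C A then ye K C A y (m + Pi.single k 1) else 0)
                  - (m k : ℝ) * ye K C A y m)) * G m := by
    refine Eq.trans (Finset.sum_congr rfl fun n _ => ?_)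
      (Finset.sum_coe_sort (XF K C A) (fun m =>
      ((∑ k, (lam k + gam k * avgS K C A y k) *
          ((if 1 ≤ m k then ye K C A y (m - Pi.single k 1) else 0)
            - (if m + Pi.single k 1 ∈ XF K C A then ye K C A y m else 0)))
        + ∑ k, (gam k + mu k) *
            (((m k : ℝ) + 1) *
                (if m + Pi.single k 1 ∈ XF K C A then ye K C A y (m + Pi.single k 1) else 0)
              - (m k : ℝ) * ye K C A y m)) * G m))
    rw [fderiv_gE_single K C A lam gam mu hlam hgam hmg y hy n]
    congr 1
    · rw [Vs]
      simp only [ye_coe]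
    · simp only [hGdef, ye_coe]
  -- step 2 : rearrangement
  have step2 : ∑ m ∈ XF K C A,
          ((∑ k, (lam k + gam k * avgS K C A y k) *
              ((if 1 ≤ m k then ye K C A y (m - Pi.single k 1) else 0)
                - (if m + Pi.single k 1 ∈ XF K C A then ye K C A y m else 0)))
            + ∑ k, (gam k + mu k) *
                (((m k : ℝ) + 1) *
                    (if m + Pi.single k 1 ∈ XF K C A then ye K C A y (m + Pi.single k 1) else 0)
                  - (m k : ℝ) * ye K C A y m)) * G m
      = ∑ k, ∑ n ∈ (XF K C A).filter (fun n => 1 ≤ n k),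
          ((lam k + gam k * avgS K C A y k) * ye K C A y (n - Pi.single k 1)
            - (gam k + mu k) * (n k : ℝ) * ye K C A y n) *
          (Real.log ((mu k + gam k) * (n k : ℝ) * ye K C A y n)
            - Real.log ((lam k + gam k * avgS K C A y k) * ye K C A y (n - Pi.single k 1))) := by
    exact rearrange K C A (fun k => lam k + gam k * avgS K C A y k)
      (fun k => gam k + mu k) (ye K C A y) G
      (fun k n => Real.log ((mu k + gam k) * (n k : ℝ) * ye K C A y n)
        - Real.log ((lam k + gam k * avgS K C A y k) * ye K C A y (n - Pi.single k 1)))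
      hGdiff
  -- step 3 : identify with the RHS of the statement
  have step3 : ∀ k, (∑ n ∈ Finset.univ.filter (fun n : XF K C A => 1 ≤ n.1 k),
        FE K C A lam gam mu y k n *
          Real.log ((lam k + gam k * avgS K C A y k) * ye K C A y (n.1 - Pi.single k 1) /
            ((mu k + gam k) * (n.1 k : ℝ) * y n)))
      = ∑ n ∈ (XF K C A).filter (fun n => 1 ≤ n k),
          ((lam k + gam k * avgS K C A y k) * ye K C A y (n - Pi.single k 1)
            - (gam k + mu k) * (n k : ℝ) * ye K C A y n) *
          (Real.log ((mu k + gam k) * (n k : ℝ) * ye K C A y n)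
            - Real.log ((lam k + gam k * avgS K C A y k) * ye K C A y (n - Pi.single k 1))) := by
    intro k
    rw [Finset.sum_filter, Finset.sum_filter]
    refine Eq.trans (Finset.sum_congr rfl fun n _ => ?_)
      (Finset.sum_coe_sort (XF K C A) (fun n => if 1 ≤ n k then
        ((lam k + gam k * avgS K C A y k) * ye K C A y (n - Pi.single k 1)
          - (gam k + mu k) * (n k : ℝ) * ye K C A y n) *
        (Real.log ((mu k + gam k) * (n k : ℝ) * ye K C A y n)
          - Real.log ((lam k + gam k * avgS K C A y k) * ye K C A y (n - Pi.single k 1))) else 0))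
    by_cases h : 1 ≤ n.1 k
    · rw [if_pos h, if_pos h]
      have hn' : n.1 - Pi.single k 1 ∈ XF K C A := sub_mem_XF n.2 k
      have hYn : 0 < ye K C A y n.1 := hYpos _ n.2
      have hYn' : 0 < ye K C A y (n.1 - Pi.single k 1) := hYpos _ hn'
      have hnkR : 0 < ((n.1 k : ℕ) : ℝ) := by exact_mod_cast h
      have hnum : (0:ℝ) < (lam k + gam k * avgS K C A y k) * ye K C A y (n.1 - Pi.single k 1) :=
        mul_pos (hlampos k) hYn'
      have hden : (0:ℝ) < (mu k + gam k) * (n.1 k : ℝ) * ye K C A y n.1 :=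
        mul_pos (mul_pos (hmg k) hnkR) hYn
      rw [FE, ← ye_coe K C A y n, Real.log_div hnum.ne' hden.ne']
      ring
    · rw [if_neg h, if_neg h]
  -- the identity
  have hEq : (∑ n : XF K C A, Vs K C A lam gam mu y n *
        fderiv ℝ (gE K C A lam gam mu) y (Pi.single n 1)) =
      (∑ k, ∑ n ∈ Finset.univ.filter (fun n : XF K C A => 1 ≤ n.1 k),
        FE K C A lam gam mu y k n *
          Real.log ((lam k + gam k * avgS K C A y k) * ye K C A y (n.1 - Pi.single k 1) /
            ((mu k + gam k) * (n.1 k : ℝ) * y n))) := by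
    rw [step1, step2]
    exact (Finset.sum_congr rfl fun k _ => step3 k).symm
  refine ⟨hEq, ?_⟩
  rw [hEq]
  apply Finset.sum_nonpos
  intro k _
  apply Finset.sum_nonpos
  intro n hn
  rw [Finset.mem_filter] at hn
  have h : 1 ≤ n.1 k := hn.2
  have hn' : n.1 - Pi.single k 1 ∈ XF K C A := sub_mem_XF n.2 k
  have hYn' : 0 < ye K C A y (n.1 - Pi.single k 1) := hYpos _ hn'
  have hnkR : 0 < ((n.1 k : ℕ) : ℝ) := by exact_mod_cast h
  have hnum : (0:ℝ) < (lam k + gam k * avgS K C A y k) * ye K C A y (n.1 - Pi.single k 1) :=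
    mul_pos (hlampos k) hYn'
  have hden : (0:ℝ) < (mu k + gam k) * (n.1 k : ℝ) * y n :=
    mul_pos (mul_pos (hmg k) hnkR) (hy n)
  have hFE : FE K C A lam gam mu y k n
      = (mu k + gam k) * (n.1 k : ℝ) * y n
        - (lam k + gam k * avgS K C A y k) * ye K C A y (n.1 - Pi.single k 1) := rfl
  rw [hFE, Real.log_div hnum.ne' hden.ne']
  rcases le_total ((lam k + gam k * avgS K C A y k) * ye K C A y (n.1 - Pi.single k 1))
      ((mu k + gam k) * (n.1 k : ℝ) * y n) with hle | hle
  · have hlog : Real.log ((lam k + gam k * avgS K C A y k) * ye K C A y (n.1 - Pi.single k 1))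
        ≤ Real.log ((mu k + gam k) * (n.1 k : ℝ) * y n) := Real.log_le_log hnum hle
    nlinarith
  · have hlog : Real.log ((mu k + gam k) * (n.1 k : ℝ) * y n)
        ≤ Real.log ((lam k + gam k * avgS K C A y k) * ye K C A y (n.1 - Pi.single k 1)) :=
      Real.log_le_log hden hle
    nlinarith
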